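/- arXiv:1505.01351 — 2 statements merged into one kernel-verified Lean document; each statement's English description precedes it below -/
import Mathlib

section
/- The McDonald Gompertz density f(y; a,b,c,θ,γ) = (cθ e^{γy}/B(a/c,b)) · exp(-(θ/γ)(e^{γy}-1)) · [1 - exp(-(θ/γ)(e^{γy}-1))]^{a-1} · {1 - [1 - exp(-(θ/γ)(e^{γy}-1))]^c}^{b-1} is the derivative of the cdf F(y; a,b,c,θ,γ) = I(G(y)^c; a/c, b) at every y > 0. -/
open Real Filter Set MeasureTheory

noncomputable def incBeta (p q x : ℝ) : ℝ :=
  ∫ w in (0:ℝ)..x, w ^ (p - 1) * (1 - w) ^ (q - 1)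

noncomputable def regIncBeta (p q x : ℝ) : ℝ :=
  incBeta p q x / incBeta p q 1

noncomputable def gompertzCDF (θ γ y : ℝ) : ℝ :=
  1 - Real.exp (-(θ / γ) * (Real.exp (γ * y) - 1))

noncomputable def mcgCDF (a b c θ γ y : ℝ) : ℝ :=
  regIncBeta (a / c) b ((gompertzCDF θ γ y) ^ c)

noncomputable def mcgPDF (a b c θ γ y : ℝ) : ℝ :=
  c * θ * Real.exp (γ * y) / incBeta (a / c) b 1 *
    Real.exp (-(θ / γ) * (Real.exp (γ * y) - 1)) *
    (1 - Real.exp (-(θ / γ) * (Real.exp (γ * y) - 1))) ^ (a - 1) *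
    (1 - (1 - Real.exp (-(θ / γ) * (Real.exp (γ * y) - 1))) ^ c) ^ (b - 1)

lemma incBeta_hasDerivAt {p q x : ℝ} (hp : 0 < p) (hx : x ∈ Set.Ioo (0:ℝ) 1) :
    HasDerivAt (fun x => incBeta p q x) (x ^ (p-1) * (1-x) ^ (q-1)) x := by
  obtain ⟨hx0, hx1⟩ := hx
  have hmeas : Measurable (fun w : ℝ => w ^ (p-1) * (1-w) ^ (q-1)) := by fun_prop
  have hint : IntervalIntegrable (fun w : ℝ => w ^ (p-1) * (1-w) ^ (q-1)) volume 0 x := by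
    apply IntervalIntegrable.mul_continuousOn
    · exact intervalIntegral.intervalIntegrable_rpow' (by linarith)
    · apply ContinuousOn.rpow_const (continuous_const.sub continuous_id).continuousOn
      intro w hw
      rw [Set.uIcc_of_le hx0.le] at hw
      left
      simp only [Pi.sub_apply, id_eq]
      intro h
      have := hw.2
      linarith
  have hcont : ContinuousAt (fun w : ℝ => w ^ (p-1) * (1-w) ^ (q-1)) x := by
    apply ContinuousAt.mul
    · exact Real.continuousAt_rpow_const _ _ (Or.inl hx0.ne')
    · apply ContinuousAt.rpow_const ((continuous_const.sub continuous_id).continuousAt)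
      left
      simp only [Pi.sub_apply, id_eq]
      intro h
      linarith
  exact intervalIntegral.integral_hasDerivAt_right hint
    ⟨Set.univ, Filter.univ_mem, hmeas.aestronglyMeasurable.restrict⟩ hcont

theorem mcg_pdf_is_deriv_of_cdf (a b c θ γ : ℝ)
    (ha : 0 < a) (hb : 0 < b) (hc : 0 < c) (hθ : 0 < θ) (hγ : 0 < γ) :
    ∀ y : ℝ, 0 < y →
      HasDerivAt (fun t => mcgCDF a b c θ γ t) (mcgPDF a b c θ γ y) y := by
  intro y hy
  set E := Real.exp (γ * y) with hE
  have hE1 : 1 < E := by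
    rw [hE]
    have : (0:ℝ) < γ * y := mul_pos hγ hy
    calc (1:ℝ) = Real.exp 0 := by simp
    _ < Real.exp (γ * y) := Real.exp_lt_exp.2 this
  set u := Real.exp (-(θ / γ) * (E - 1)) with hu
  have hu0 : 0 < u := Real.exp_pos _
  have hu1 : u < 1 := by
    rw [hu, Real.exp_lt_one_iff]
    have h1 : 0 < θ / γ := div_pos hθ hγ
    nlinarith
  have hG0 : 0 < gompertzCDF θ γ y := by
    simp only [gompertzCDF, ← hE, ← hu]; linarith
  have hG1 : gompertzCDF θ γ y < 1 := by
    simp only [gompertzCDF, ← hE, ← hu]; linarith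
  set G := gompertzCDF θ γ y with hGdef
  have hGc : G ^ c ∈ Set.Ioo (0:ℝ) 1 :=
    ⟨Real.rpow_pos_of_pos hG0 c, Real.rpow_lt_one hG0.le hG1 hc⟩
  -- derivative of the inner exponent
  have h1 : HasDerivAt (fun t : ℝ => γ * t) γ y := by
    simpa using (hasDerivAt_id y).const_mul γ
  have h2 : HasDerivAt (fun t : ℝ => -(θ / γ) * (Real.exp (γ * t) - 1))
      (-(θ / γ) * (E * γ)) y := by
    exact ((h1.exp).sub_const 1).const_mul _
  have hGd : HasDerivAt (fun t => gompertzCDF θ γ t) (θ * E * u) y := by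
    have h3 := h2.exp
    have h4 := (hasDerivAt_const y (1:ℝ)).sub h3
    simp only [gompertzCDF]
    refine h4.congr_deriv ?_
    rw [← hu]
    field_simp
    ring
  have hGcd : HasDerivAt (fun t => gompertzCDF θ γ t ^ c)
      (θ * E * u * c * G ^ (c - 1)) y :=
    hGd.rpow_const (Or.inl hG0.ne')
  have hib := (incBeta_hasDerivAt (p := a / c) (q := b) (div_pos ha hc) hGc).comp y hGcd
  have hfinal := hib.div_const (incBeta (a / c) b 1)
  have heq : mcgPDF a b c θ γ y =
      (G ^ c) ^ (a / c - 1) * (1 - G ^ c) ^ (b - 1) * (θ * E * u * c * G ^ (c - 1)) /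
        incBeta (a / c) b 1 := by
    have key : (G ^ c) ^ (a / c - 1) * G ^ (c - 1) = G ^ (a - 1) := by
      rw [← Real.rpow_mul hG0.le, ← Real.rpow_add hG0]
      congr 1
      field_simp
      ring
    have hGu : (1 : ℝ) - u = G := by
      rw [hGdef]
      show (1:ℝ) - u = 1 - Real.exp (-(θ / γ) * (Real.exp (γ * y) - 1))
      rw [← hE, ← hu]
    simp only [mcgPDF, ← hE, ← hu, hGu]
    rw [← key]
    ring
  rw [heq]
  exact hfinal
end

section
/- If 0 < a < 1, then lim_{y→0⁺} f(y; a,b,c,θ,γ) = +∞, where f is the McDonald Gompertz density with parameters a, b, c, θ, γ > 0. -/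
open Real Filter Set MeasureTheory Topology

lemma incBeta_one_pos {p q : ℝ} (hp : 0 < p) (hq : 0 < q) : 0 < incBeta p q 1 := by
  have hc := Complex.betaIntegral_convergent (u := (p : ℂ)) (v := (q : ℂ))
    (by simpa using hp) (by simpa using hq)
  have hint : IntervalIntegrable (fun w : ℝ => w ^ (p - 1) * (1 - w) ^ (q - 1)) volume 0 1 := by
    rw [intervalIntegrable_iff, uIoc_of_le (by norm_num : (0:ℝ) ≤ 1)] at hc ⊢
    refine MeasureTheory.IntegrableOn.congr_fun hc.re (fun x hx => ?_) measurableSet_Ioc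
    have hx0 : (0:ℝ) ≤ x := hx.1.le
    have hx1 : (0:ℝ) ≤ 1 - x := by linarith [hx.2]
    simp only [RCLike.re_to_complex]
    rw [show ((p:ℂ) - 1) = ((p - 1 : ℝ) : ℂ) by push_cast; ring,
      show ((q:ℂ) - 1) = ((q - 1 : ℝ) : ℂ) by push_cast; ring,
      show (1 - (x:ℂ)) = ((1 - x : ℝ) : ℂ) by push_cast; ring,
      ← Complex.ofReal_cpow hx0, ← Complex.ofReal_cpow hx1, ← Complex.ofReal_mul,
      Complex.ofReal_re]
  refine intervalIntegral.intervalIntegral_pos_of_pos_on hint (fun x hx => ?_) one_pos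
  exact mul_pos (Real.rpow_pos_of_pos hx.1 _) (Real.rpow_pos_of_pos (by linarith [hx.2]) _)

theorem mcg_pdf_limit_at_zero_a_lt_one (a b c θ γ : ℝ)
    (ha0 : 0 < a) (ha1 : a < 1) (hb : 0 < b) (hc : 0 < c) (hθ : 0 < θ) (hγ : 0 < γ) :
    Tendsto (fun y => mcgPDF a b c θ γ y) (nhdsWithin 0 (Set.Ioi 0)) atTop := by
  set B := incBeta (a / c) b 1 with hB
  have hBpos : 0 < B := incBeta_one_pos (div_pos ha0 hc) hb
  set G : ℝ → ℝ := fun y => 1 - Real.exp (-(θ / γ) * (Real.exp (γ * y) - 1)) with hGdef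
  -- G is continuous, G 0 = 0
  have hGcont : Continuous G := by fun_prop
  have hG0 : G 0 = 0 := by simp [hGdef]
  -- eventually G y > 0 on Ioi 0
  have hGpos : ∀ y ∈ Set.Ioi (0:ℝ), 0 < G y := by
    intro y hy
    have h1 : (1:ℝ) < Real.exp (γ * y) := by
      have h := Real.exp_lt_exp.2 (show (0:ℝ) < γ * y from mul_pos hγ hy)
      simpa using h
    have h2 : -(θ / γ) * (Real.exp (γ * y) - 1) < 0 := by
      have := div_pos hθ hγ
      nlinarith
    have := Real.exp_lt_one_iff.mpr h2
    simp only [hGdef]; linarith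
  -- G tends to 0 within Ioi 0 (from above)
  have hGt : Tendsto G (nhdsWithin 0 (Set.Ioi 0)) (nhdsWithin 0 (Set.Ioi 0)) := by
    apply tendsto_nhdsWithin_of_tendsto_nhds_of_eventually_within
    · simpa [hG0] using (hGcont.tendsto 0).mono_left nhdsWithin_le_nhds
    · exact eventually_nhdsWithin_of_forall hGpos
  -- G^(a-1) → atTop
  have hGa : Tendsto (fun y => (G y) ^ (a - 1)) (nhdsWithin 0 (Set.Ioi 0)) atTop := by
    have h1 : Tendsto (fun y => ((G y)⁻¹) ^ (1 - a)) (nhdsWithin 0 (Set.Ioi 0)) atTop :=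
      (tendsto_rpow_atTop (by linarith : (0:ℝ) < 1 - a)).comp
        (tendsto_inv_nhdsGT_zero.comp hGt)
    refine h1.congr' ?_
    filter_upwards [eventually_nhdsWithin_of_forall hGpos] with y hy
    show (G y)⁻¹ ^ (1 - a) = G y ^ (a - 1)
    rw [Real.inv_rpow hy.le, ← Real.rpow_neg hy.le, neg_sub]
  -- the remaining factor tends to c*θ/B
  have hF : Tendsto (fun y => c * θ * Real.exp (γ * y) / B *
      Real.exp (-(θ / γ) * (Real.exp (γ * y) - 1)) * (1 - (G y) ^ c) ^ (b - 1))
      (nhdsWithin 0 (Set.Ioi 0)) (𝓝 (c * θ / B)) := by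
    have cG : ContinuousAt G 0 := hGcont.continuousAt
    have cGc : ContinuousAt (fun y => (G y) ^ c) 0 :=
      (Real.continuousAt_rpow_const (G 0) c (Or.inr hc.le)).comp cG
    have cbase : ContinuousAt (fun y => 1 - (G y) ^ c) 0 := continuousAt_const.sub cGc
    have houter : ContinuousAt (fun x : ℝ => x ^ (b - 1)) (1 - (G 0) ^ c) := by
      apply Real.continuousAt_rpow_const
      left
      rw [hG0, Real.zero_rpow hc.ne']
      norm_num
    have c3 : ContinuousAt (fun y => (1 - G y ^ c) ^ (b - 1)) 0 :=
      ContinuousAt.comp (f := fun y => 1 - G y ^ c) houter cbase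
    have c12 : ContinuousAt (fun y => c * θ * Real.exp (γ * y) / B *
        Real.exp (-(θ / γ) * (Real.exp (γ * y) - 1))) 0 := by fun_prop
    have h := (c12.mul c3).tendsto.mono_left (nhdsWithin_le_nhds (s := Set.Ioi (0:ℝ)))
    convert h using 2
    simp [hG0, Real.zero_rpow hc.ne', Real.one_rpow]
    simp [Pi.mul_apply, hG0, Real.zero_rpow hc.ne', Real.one_rpow]
  have hmain := hF.pos_mul_atTop (div_pos (mul_pos hc hθ) hBpos) hGa
  refine hmain.congr (fun y => ?_)
  simp only [mcgPDF, hGdef]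
  ring
end
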